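/- Let p = 4m+1 be prime with m ≥ 1 and let δ₁, δ₂ ∈ {1, −1}. Then det[(j+k / p) + (j−k / p) + δ₁·(j²+δ₂k² / p)]_{0≤j,k≤2m} ≡ δ₁^{2m+1} · det[(j²+δ₂k² / p)]_{0≤j,k≤2m} (mod p), where both determinants are of integer matrices indexed by 0 ≤ j, k ≤ 2m. -/
import Mathlib


open Matrix BigOperators Finset

set_option linter.unusedVariables false

private lemma sum_range_two_mul {M : Type*} [AddCommMonoid M] (f : ℕ → M) (n : ℕ) :
    ∑ i ∈ range (2 * n), f i = ∑ t ∈ range n, (f (2 * t) + f (2 * t + 1)) := by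
  induction n with
  | zero => simp
  | succ n ih =>
      have h : 2 * (n + 1) = (2 * n + 1) + 1 := by ring
      rw [h, Finset.sum_range_succ, Finset.sum_range_succ, ih, Finset.sum_range_succ]
      abel

private lemma even_binom {R : Type*} [CommRing R] (m : ℕ) (x y : R) :
    (x + y) ^ (2 * m) + (x - y) ^ (2 * m)
      = ∑ t ∈ range (m + 1),
          2 * (Nat.choose (2 * m) (2 * t) : R) * x ^ (2 * t) * y ^ (2 * (m - t)) := by
  have h2 : (x - y) ^ (2 * m)
      = ∑ k ∈ range (2 * m + 1), x ^ k * (-y) ^ (2 * m - k) * (Nat.choose (2 * m) k : R) := by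
    rw [sub_eq_add_neg, add_pow]
  rw [add_pow, h2, ← Finset.sum_add_distrib]
  have hg : ∀ k, x ^ k * y ^ (2*m - k) * (Nat.choose (2*m) k : R)
      + x ^ k * (-y) ^ (2*m - k) * (Nat.choose (2*m) k : R)
      = x ^ k * (y ^ (2*m - k) + (-y) ^ (2*m - k)) * (Nat.choose (2*m) k : R) := by
    intro k; ring
  calc ∑ k ∈ range (2*m+1), (x ^ k * y ^ (2*m - k) * (Nat.choose (2*m) k : R)
        + x ^ k * (-y) ^ (2*m - k) * (Nat.choose (2*m) k : R))
      = ∑ k ∈ range (2*(m+1)), x ^ k * (y ^ (2*m - k) + (-y) ^ (2*m - k)) * (Nat.choose (2*m) k : R) := by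
        have hz : ∑ k ∈ range (2*(m+1)), x ^ k * (y ^ (2*m - k) + (-y) ^ (2*m - k)) * (Nat.choose (2*m) k : R)
            = ∑ k ∈ range (2*m+1), x ^ k * (y ^ (2*m - k) + (-y) ^ (2*m - k)) * (Nat.choose (2*m) k : R) := by
          rw [show 2*(m+1) = (2*m+1)+1 by ring, Finset.sum_range_succ,
            Nat.choose_eq_zero_of_lt (show 2*m < 2*m+1 by omega)]
          push_cast
          rw [mul_zero, add_zero]
        rw [hz]
        exact Finset.sum_congr rfl fun k _ => hg k
    _ = ∑ t ∈ range (m+1),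
          (x ^ (2*t) * (y ^ (2*m - 2*t) + (-y) ^ (2*m - 2*t)) * (Nat.choose (2*m) (2*t) : R)
          + x ^ (2*t+1) * (y ^ (2*m - (2*t+1)) + (-y) ^ (2*m - (2*t+1))) * (Nat.choose (2*m) (2*t+1) : R)) := by
        exact sum_range_two_mul _ (m+1)
    _ = ∑ t ∈ range (m+1), 2 * (Nat.choose (2*m) (2*t) : R) * x ^ (2*t) * y ^ (2*(m-t)) := by
        refine Finset.sum_congr rfl fun t ht => ?_
        rw [Finset.mem_range] at ht
        have ht' : t ≤ m := by omega
        have e1 : 2*m - 2*t = 2*(m-t) := by omega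
        have e2 : (-y) ^ (2*(m-t)) = y ^ (2*(m-t)) := Even.neg_pow (even_two_mul _) y
        have e3 : x ^ (2*t+1) * (y ^ (2*m - (2*t+1)) + (-y) ^ (2*m - (2*t+1))) * (Nat.choose (2*m) (2*t+1) : R) = 0 := by
          rcases eq_or_lt_of_le ht' with h | h
          · subst h
            rw [Nat.choose_eq_zero_of_lt (by omega)]
            push_cast; ring
          · have hodd : Odd (2*m - (2*t+1)) := by
              refine ⟨m - t - 1, by omega⟩
            rw [Odd.neg_pow hodd]
            ring
        rw [e1, e2, e3, add_zero]
        ring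


section
variable {R : Type*} [CommRing R]

private lemma sum_range_two_mul' {M : Type*} [AddCommMonoid M] (f : ℕ → M) (N : ℕ) :
    ∑ i ∈ range (2 * N), f i = ∑ t ∈ range N, (f (2 * t) + f (2 * t + 1)) := by
  induction N with
  | zero => simp
  | succ N ih =>
      rw [show 2 * (N + 1) = (2 * N + 1) + 1 by ring, Finset.sum_range_succ,
        Finset.sum_range_succ, ih, Finset.sum_range_succ]
      abel

private lemma key_det (m : ℕ) (hm : 1 ≤ m) (d₁ d₂ : R) (v : Fin (2*m+1) → R)
    (even_binom : ∀ (x y : R), (x + y) ^ (2 * m) + (x - y) ^ (2 * m)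
      = ∑ t ∈ range (m + 1),
          2 * (Nat.choose (2 * m) (2 * t) : R) * x ^ (2 * t) * y ^ (2 * (m - t))) :
    (Matrix.of fun j k : Fin (2*m+1) =>
        (v j + v k) ^ (2*m) + (v j - v k) ^ (2*m)
          + d₁ * (v j ^ 2 + d₂ * v k ^ 2) ^ (2*m)).det
      = d₁ ^ (2*m+1)
        * (Matrix.of fun j k : Fin (2*m+1) => (v j ^ 2 + d₂ * v k ^ 2) ^ (2*m)).det := by
  set P : Matrix (Fin (2*m+1)) (Fin (2*m+1)) R := Matrix.of fun j a => v j ^ (2 * (a:ℕ)) with hP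
  set Q : Matrix (Fin (2*m+1)) (Fin (2*m+1)) R := Matrix.of fun b k => v k ^ (2 * (2*m - (b:ℕ))) with hQ
  set dN : Fin (2*m+1) → R := fun a => (Nat.choose (2*m) (a:ℕ) : R) * d₂ ^ (2*m - (a:ℕ)) with hdN
  set AD : Matrix (Fin (2*m+1)) (Fin (2*m+1)) R := Matrix.of (fun a b =>
      if (b:ℕ) = (a:ℕ) + m then 2 * (Nat.choose (2*m) (2*(a:ℕ)) : R) else 0) with hAD
  -- the N-part
  have hNmat : P * Matrix.diagonal dN * Q
      = Matrix.of fun j k : Fin (2*m+1) => (v j ^ 2 + d₂ * v k ^ 2) ^ (2*m) := by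
    ext j k
    conv_lhs => rw [Matrix.mul_apply]
    simp only [Matrix.mul_diagonal, Matrix.of_apply, hP, hQ, hdN]
    rw [Fin.sum_univ_eq_sum_range
      (fun b => v j ^ (2*b) * ((Nat.choose (2*m) b : R) * d₂ ^ (2*m - b)) * v k ^ (2*(2*m-b)))]
    rw [add_pow]
    refine Finset.sum_congr rfl fun i hi => ?_
    simp only [mul_pow, ← pow_mul]
    ring
  -- the D-part
  have hDmat : P * AD * Q
      = Matrix.of fun j k : Fin (2*m+1) => (v j + v k) ^ (2*m) + (v j - v k) ^ (2*m) := by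
    ext j k
    simp only [Matrix.mul_apply, Matrix.of_apply, hP, hQ, hAD, Finset.sum_mul,
      mul_ite, ite_mul, mul_zero, zero_mul]
    rw [Finset.sum_comm]
    have hin : ∀ a : Fin (2*m+1),
        (∑ b : Fin (2*m+1), if (b:ℕ) = (a:ℕ) + m then
            v j ^ (2*(a:ℕ)) * (2 * (Nat.choose (2*m) (2*(a:ℕ)) : R)) * v k ^ (2*(2*m - (b:ℕ))) else 0)
        = if (a:ℕ) + m ∈ range (2*m+1) then
            v j ^ (2*(a:ℕ)) * (2 * (Nat.choose (2*m) (2*(a:ℕ)) : R)) * v k ^ (2*(2*m - ((a:ℕ)+m))) else 0 := by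
      intro a
      rw [Fin.sum_univ_eq_sum_range (fun b => if b = (a:ℕ) + m then
            v j ^ (2*(a:ℕ)) * (2 * (Nat.choose (2*m) (2*(a:ℕ)) : R)) * v k ^ (2*(2*m - b)) else 0)]
      exact Finset.sum_ite_eq' _ _ _
    calc ∑ a : Fin (2*m+1), ∑ b : Fin (2*m+1), (if (b:ℕ) = (a:ℕ) + m then
            v j ^ (2*(a:ℕ)) * (2 * (Nat.choose (2*m) (2*(a:ℕ)) : R)) * v k ^ (2*(2*m - (b:ℕ))) else 0)
        = ∑ a ∈ range (2*m+1), (if a + m ∈ range (2*m+1) then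
            v j ^ (2*a) * (2 * (Nat.choose (2*m) (2*a) : R)) * v k ^ (2*(2*m - (a+m))) else 0) := by
          rw [← Fin.sum_univ_eq_sum_range]
          exact Finset.sum_congr rfl fun a _ => hin a
      _ = ∑ a ∈ range (m+1), v j ^ (2*a) * (2 * (Nat.choose (2*m) (2*a) : R)) * v k ^ (2*(m - a)) := by
          have hsub : range (m+1) ⊆ range (2*m+1) := by
            intro x hx; rw [Finset.mem_range] at *; omega
          have hzero : ∀ x ∈ range (2*m+1), x ∉ range (m+1) →
              (if x + m ∈ range (2*m+1) then
                v j ^ (2*x) * (2 * (Nat.choose (2*m) (2*x) : R)) * v k ^ (2*(2*m - (x+m))) else 0) = 0 := by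
            intro x hx hx'
            rw [Finset.mem_range] at hx
            rw [Finset.mem_range] at hx'
            rw [if_neg (by rw [Finset.mem_range]; omega)]
          rw [← Finset.sum_subset hsub hzero]
          refine Finset.sum_congr rfl fun a ha => ?_
          rw [Finset.mem_range] at ha
          rw [if_pos (Finset.mem_range.mpr (by omega)), show 2*m - (a+m) = m - a by omega]
      _ = (v j + v k) ^ (2*m) + (v j - v k) ^ (2*m) := by
          rw [even_binom (v j) (v k)]
          exact Finset.sum_congr rfl fun a _ => by ring
  have hM : (Matrix.of fun j k : Fin (2*m+1) =>
        (v j + v k) ^ (2*m) + (v j - v k) ^ (2*m)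
          + d₁ * (v j ^ 2 + d₂ * v k ^ 2) ^ (2*m))
      = P * (AD + d₁ • Matrix.diagonal dN) * Q := by
    rw [Matrix.mul_add, Matrix.add_mul, Matrix.mul_smul, Matrix.smul_mul, hNmat, hDmat]
    ext j k
    simp only [Matrix.add_apply, Matrix.smul_apply, Matrix.of_apply, smul_eq_mul]
  have htri : (AD + d₁ • Matrix.diagonal dN).BlockTriangular id := by
    intro a b hab
    have hab' : b < a := hab
    simp only [Matrix.add_apply, Matrix.smul_apply, hAD, Matrix.of_apply, smul_eq_mul]
    rw [if_neg (by have := Fin.lt_iff_val_lt_val.mp hab'; omega),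
      Matrix.diagonal_apply_ne dN (by exact fun h => absurd h (ne_of_gt hab'))]
    ring
  have hdiag : ∀ a : Fin (2*m+1), (AD + d₁ • Matrix.diagonal dN) a a = d₁ * dN a := by
    intro a
    simp only [Matrix.add_apply, Matrix.smul_apply, hAD, Matrix.of_apply, smul_eq_mul,
      Matrix.diagonal_apply_eq]
    rw [if_neg (by omega)]
    ring
  rw [hM, Matrix.det_mul, Matrix.det_mul, ← hNmat, Matrix.det_mul, Matrix.det_mul]
  rw [Matrix.det_of_upperTriangular htri, Matrix.det_diagonal]
  calc P.det * (∏ a, (AD + d₁ • Matrix.diagonal dN) a a) * Q.det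
      = P.det * (∏ a : Fin (2*m+1), d₁ * dN a) * Q.det := by
        rw [Finset.prod_congr rfl fun a _ => hdiag a]
    _ = d₁ ^ (2*m+1) * (P.det * (∏ a, dN a) * Q.det) := by
        rw [Finset.prod_mul_distrib, Finset.prod_const, Finset.card_univ, Fintype.card_fin]
        ring
end



/-- The two-antidiagonal observation: the full determinant is congruent to
`δ₁^{2m+1} · T(δ₂, p)` modulo `p`. -/
theorem stmt_18 (m : ℕ) (hm : 1 ≤ m) (p : ℕ) (hpm : p = 4 * m + 1) [Fact p.Prime]
    (δ₁ δ₂ : ℤ) (hδ₁ : δ₁ = 1 ∨ δ₁ = -1) (hδ₂ : δ₂ = 1 ∨ δ₂ = -1) :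
    (Matrix.of fun j k : Fin (2 * m + 1) =>
        legendreSym p (((j : ℕ) : ℤ) + ((k : ℕ) : ℤ))
          + legendreSym p (((j : ℕ) : ℤ) - ((k : ℕ) : ℤ))
          + δ₁ * legendreSym p (((j : ℕ) : ℤ) ^ 2 + δ₂ * ((k : ℕ) : ℤ) ^ 2)).det
      ≡ δ₁ ^ (2 * m + 1)
          * (Matrix.of fun j k : Fin (2 * m + 1) =>
              legendreSym p (((j : ℕ) : ℤ) ^ 2 + δ₂ * ((k : ℕ) : ℤ) ^ 2)).det
        [ZMOD (p : ℤ)] := by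
  have hp2 : p / 2 = 2 * m := by omega
  rw [← ZMod.intCast_eq_intCast_iff]
  set A : Matrix (Fin (2*m+1)) (Fin (2*m+1)) ℤ := Matrix.of fun j k : Fin (2 * m + 1) =>
        legendreSym p (((j : ℕ) : ℤ) + ((k : ℕ) : ℤ))
          + legendreSym p (((j : ℕ) : ℤ) - ((k : ℕ) : ℤ))
          + δ₁ * legendreSym p (((j : ℕ) : ℤ) ^ 2 + δ₂ * ((k : ℕ) : ℤ) ^ 2) with hA
  set B : Matrix (Fin (2*m+1)) (Fin (2*m+1)) ℤ := Matrix.of fun j k : Fin (2 * m + 1) =>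
        legendreSym p (((j : ℕ) : ℤ) ^ 2 + δ₂ * ((k : ℕ) : ℤ) ^ 2) with hB
  have hmap : ∀ M : Matrix (Fin (2*m+1)) (Fin (2*m+1)) ℤ,
      ((M.det : ℤ) : ZMod p) = (M.map (fun x : ℤ => (x : ZMod p))).det :=
    fun M => RingHom.map_det (Int.castRingHom (ZMod p)) M
  rw [Int.cast_mul, Int.cast_pow, hmap A, hmap B]
  have hAmap : A.map (fun x : ℤ => (x : ZMod p))
      = Matrix.of fun j k : Fin (2*m+1) =>
          (((j:ℕ) : ZMod p) + ((k:ℕ) : ZMod p)) ^ (2*m)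
            + (((j:ℕ) : ZMod p) - ((k:ℕ) : ZMod p)) ^ (2*m)
            + (δ₁ : ZMod p) * (((j:ℕ) : ZMod p) ^ 2 + (δ₂ : ZMod p) * ((k:ℕ) : ZMod p) ^ 2) ^ (2*m) := by
    ext j k
    simp only [Matrix.map_apply, Matrix.of_apply, Int.cast_add, Int.cast_mul, hA]
    rw [legendreSym.eq_pow, legendreSym.eq_pow, legendreSym.eq_pow, hp2]
    push_cast
    ring
  have hBmap : B.map (fun x : ℤ => (x : ZMod p))
      = Matrix.of fun j k : Fin (2*m+1) =>
          (((j:ℕ) : ZMod p) ^ 2 + (δ₂ : ZMod p) * ((k:ℕ) : ZMod p) ^ 2) ^ (2*m) := by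
    ext j k
    simp only [Matrix.map_apply, Matrix.of_apply, hB]
    rw [legendreSym.eq_pow, hp2]
    push_cast
    ring
  rw [hAmap, hBmap]
  exact key_det m hm (δ₁ : ZMod p) (δ₂ : ZMod p) (fun j => ((j:ℕ) : ZMod p))
    (fun x y => even_binom m x y)
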